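/- arXiv:2203.01020 — 2 statements merged into one kernel-verified Lean document; each statement's English description precedes it below -/
import Mathlib

section
/- Let 1 ≤ p < ∞ and let (X,d,μ) be a metric measure space such that μ is doubling and supports a p-Poincaré inequality, X has the annular chain property at O ∈ X, and X has a weak polar coordinate system (𝕊, σ, {γ_ξ}_{ξ∈𝕊}, h) at O. If Mod_p(\hatΓ^O(𝕊)) > 0, then 𝓡_p(O) < ∞. -/
open MeasureTheory Metric Filter Set
open scoped ENNReal

variable {X : Type*}

section Defs
variable [MetricSpace X]

/-- `γ` is parameterized by arc length on the set `I`: its length (total variation)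
on each subinterval `[a,b] ⊆ I` equals `b - a`. -/
def IsArclengthOn (γ : ℝ → X) (I : Set ℝ) : Prop :=
  ∀ a b : ℝ, a ∈ I → b ∈ I → a ≤ b →
    eVariationOn γ (Set.Icc a b) = ENNReal.ofReal (b - a)

/-- An infinite curve: parameterized by arc length on `[0,∞)`, and its image is not
contained in any ball. -/
def IsInfiniteCurve (γ : ℝ → X) : Prop :=
  IsArclengthOn γ (Set.Ici 0) ∧ ∀ (x : X) (r : ℝ), ¬ (γ '' Set.Ici 0 ⊆ ball x r)

/-- The family `Γ^∞` of all infinite curves in `X`. -/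
def InfiniteCurves (X : Type*) [MetricSpace X] : Set (ℝ → X) :=
  {γ | IsInfiniteCurve γ}

/-- `ρ` is an upper gradient of `u`: for every curve parameterized by arc length on a
compact interval `[0,L]`, `|u(γ 0) - u(γ L)| ≤ ∫_γ ρ ds`. -/
def IsUpperGradient (ρ : X → ℝ≥0∞) (u : X → ℝ) : Prop :=
  ∀ (γ : ℝ → X) (L : ℝ), 0 < L → IsArclengthOn γ (Set.Icc 0 L) →
    ENNReal.ofReal |u (γ 0) - u (γ L)| ≤ ∫⁻ t in Set.Icc (0:ℝ) L, ρ (γ t)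

variable [MeasurableSpace X]

/-- The `p`-modulus of a family of infinite curves. -/
noncomputable def pModulus (μ : Measure X) (p : ℝ) (Γ : Set (ℝ → X)) : ℝ≥0∞ :=
  ⨅ (ρ : X → ℝ≥0∞) (_ : Measurable ρ)
    (_ : ∀ γ ∈ Γ, 1 ≤ ∫⁻ t in Set.Ici (0:ℝ), ρ (γ t)),
    ∫⁻ x, ρ x ^ p ∂μ

/-- Membership in the homogeneous Newtonian space `Ṅ^{1,p}(X)`. -/
def MemHomNewtonian (μ : Measure X) (p : ℝ) (u : X → ℝ) : Prop :=
  LocallyIntegrable u μ ∧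
  ∃ ρ : X → ℝ≥0∞, Measurable ρ ∧ IsUpperGradient ρ u ∧ (∫⁻ x, ρ x ^ p ∂μ) < ∞

/-- Doubling measure: balls have positive finite measure and measure of doubled balls
is controlled. -/
def IsDoublingMeasure (μ : Measure X) : Prop :=
  (∀ (x : X) (r : ℝ), 0 < r → 0 < μ (ball x r) ∧ μ (ball x r) < ∞) ∧
  ∃ C : ℝ≥0∞, 1 ≤ C ∧ ∀ (x : X) (r : ℝ), 0 < r → μ (ball x (2 * r)) ≤ C * μ (ball x r)

/-- `u` is integrable on all balls. -/
def IntegrableOnBalls (μ : Measure X) (u : X → ℝ) : Prop :=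
  ∀ (x : X) (r : ℝ), 0 < r → IntegrableOn u (ball x r) μ

/-- `μ` supports a `p`-Poincaré inequality with scaling factor `lam`. -/
def SupportsPoincare (μ : Measure X) (p lam : ℝ) : Prop :=
  (∀ (x : X) (r : ℝ), 0 < r → 0 < μ (ball x r) ∧ μ (ball x r) < ∞) ∧
  ∃ C : ℝ, 0 < C ∧
    ∀ (x : X) (r : ℝ), 0 < r → ∀ u : X → ℝ, IntegrableOnBalls μ u →
      ∀ ρ : X → ℝ≥0∞, Measurable ρ → IsUpperGradient ρ u →
        (⨍ y in ball x r, |u y - ⨍ z in ball x r, u z ∂μ| ∂μ) ≤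
          C * r * ((⨍⁻ y in ball x (lam * r), ρ y ^ p ∂μ) ^ (1 / p)).toReal

/-- The annular `lam`-chain condition at `O` with explicit constants `c₁, c₂, δ, M`. -/
def AnnularChainConditionWith (O : X) (lam c₁ c₂ δ : ℝ) (M : ℕ) : Prop :=
  ∀ r : ℝ, 0 < r → ∀ x y : X,
    x ∈ ball O r \ ball O (r / 2) → y ∈ ball O r \ ball O (r / 2) →
    ∃ (k : ℕ) (c : ℕ → X), 1 ≤ k ∧ k ≤ M ∧ c 0 = x ∧ c (k - 1) = y ∧
      (∀ i < k, ball (c i) (r / (lam * c₁)) ⊆ ball O (c₂ * r) \ ball O (r / c₂)) ∧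
      (∀ i, i + 1 < k →
        ∃ z : X, ball z (δ * r) ⊆ ball (c i) (r / (lam * c₁)) ∩ ball (c (i + 1)) (r / (lam * c₁)))

/-- The annular `lam`-chain condition at `O`. -/
def AnnularChainCondition (O : X) (lam : ℝ) : Prop :=
  ∃ (c₁ c₂ δ : ℝ) (M : ℕ), 1 ≤ c₁ ∧ 1 ≤ c₂ ∧ 0 < δ ∧
    AnnularChainConditionWith O lam c₁ c₂ δ M

/-- The annular chain property at `O`: the annular `lam`-chain condition holds for all `lam ≥ 1`. -/
def AnnularChainProperty (O : X) : Prop :=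
  ∀ lam : ℝ, 1 ≤ lam → AnnularChainCondition O lam

/-- The annulus `A_{2^j}(O) = B(O,2^{j+1}) \ B(O,2^j)`. -/
def annulusAt (O : X) (j : ℕ) : Set X :=
  ball O (2 ^ (j + 1)) \ ball O (2 ^ j)

/-- The quantity `𝓡_p(O)`. -/
noncomputable def scrR (μ : Measure X) (p : ℝ) (O : X) : ℝ≥0∞ :=
  if p = 1 then ⨆ j : ℕ, ENNReal.ofReal ((2:ℝ) ^ j) * (μ (annulusAt O j))⁻¹
  else ∑' j : ℕ, ENNReal.ofReal ((2:ℝ) ^ j) ^ (p / (p - 1)) * μ (annulusAt O j) ^ (1 / (1 - p))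

/-- The quantity `R_p(h,O)`. -/
noncomputable def Rp (μ : Measure X) (p : ℝ) (h : X → ℝ≥0∞) (O : X) : ℝ≥0∞ :=
  if p = 1 then essSup (fun x => (h x)⁻¹) (μ.restrict (ball O 1)ᶜ)
  else ∫⁻ x in (ball O 1)ᶜ, h x ^ (p / (1 - p)) ∂μ

/-- `(𝕊, σ, {γ_ξ}, h)` is a weak polar coordinate system at `O` with constant `C`. -/
def IsWeakPolarSystem (μ : Measure X) (O : X) {S : Type*} [MeasurableSpace S]
    (σ : Measure S) (γ : S → ℝ → X) (h : X → ℝ≥0∞) (C : ℝ≥0∞) : Prop :=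
  IsProbabilityMeasure σ ∧ (∀ ξ, IsInfiniteCurve (γ ξ)) ∧ (∀ ξ, γ ξ 0 = O) ∧
  Measurable h ∧ (∀ x, h x ≠ ∞) ∧ 0 < C ∧ C ≠ ∞ ∧
  ∀ f : X → ℝ, Integrable f μ →
    (∫⁻ ξ, (∫⁻ t in Set.Ici (0:ℝ), ENNReal.ofReal |f (γ ξ t)| * h (γ ξ t)) ∂σ)
      ≤ C * ∫⁻ x, ENNReal.ofReal |f x| ∂μ

/-- The family `\hatΓ^O(F)` of tails of radial curves indexed by `ξ ∈ F` whose
liminf distance to `O` exceeds `1`. -/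
def hatGamma (O : X) {S : Type*} (γ : S → ℝ → X) (F : Set S) : Set (ℝ → X) :=
  { g | ∃ ξ ∈ F, 1 < Filter.liminf (fun t => dist O (γ ξ t)) Filter.atTop ∧
      ∃ tξ : ℝ, 0 ≤ tξ ∧ dist O (γ ξ tξ) = 1 ∧ (∀ t, tξ < t → 1 < dist O (γ ξ t)) ∧
      g = fun t => γ ξ (t + tξ) }

end Defs

section Aux

variable [MetricSpace X]

lemma annulus_disjoint (O : X) {j k : ℕ} (hjk : j ≠ k) :
    Disjoint (annulusAt O j) (annulusAt O k) := by
  wlog hlt : j < k generalizing j k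
  · exact (this hjk.symm (by omega)).symm
  rw [Set.disjoint_left]
  rintro x ⟨hx1, -⟩ ⟨-, hx2⟩
  exact hx2 <| mem_ball.2 <| lt_of_lt_of_le (mem_ball.1 hx1)
    (pow_le_pow_right₀ (by norm_num) (by omega))

lemma arclength_dist_le {γ : ℝ → X} (harc : IsArclengthOn γ (Set.Ici 0))
    {a b : ℝ} (ha : 0 ≤ a) (hab : a ≤ b) : dist (γ a) (γ b) ≤ b - a := by
  have h1 : edist (γ a) (γ b) ≤ eVariationOn γ (Set.Icc a b) :=
    eVariationOn.edist_le γ (Set.left_mem_Icc.2 hab) (Set.right_mem_Icc.2 hab)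
  rw [harc a b ha (ha.trans hab) hab, edist_dist] at h1
  exact (ENNReal.ofReal_le_ofReal_iff (by linarith)).1 h1

/-- The crossing lemma: a `1`-Lipschitz unbounded curve starting on the unit sphere
spends an interval of time of length at least `2^j` inside the annulus `A_{2^j}(O)`. -/
lemma crossing {g : ℝ → X} {O : X}
    (hlip : ∀ a b : ℝ, 0 ≤ a → a ≤ b → dist (g a) (g b) ≤ b - a)
    (h0 : dist O (g 0) = 1)
    (hub : ∀ R : ℝ, ∃ t, 0 ≤ t ∧ R ≤ dist O (g t)) (j : ℕ) :
    ∃ s T : ℝ, 0 ≤ s ∧ s + 2 ^ j ≤ T ∧ ∀ t ∈ Set.Ioo s T, g t ∈ annulusAt O j := by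
  set f : ℝ → ℝ := fun t => dist O (g t) with hf
  have hflip : ∀ a b : ℝ, 0 ≤ a → a ≤ b → |f b - f a| ≤ b - a := by
    intro a b ha hab
    calc |f b - f a| = |dist (g b) O - dist (g a) O| := by rw [dist_comm (g b) O, dist_comm (g a) O]
    _ ≤ dist (g b) (g a) := abs_dist_sub_le _ _ _
    _ ≤ b - a := by rw [dist_comm]; exact hlip a b ha hab
  have hcont : ContinuousOn f (Set.Ici 0) := by
    apply LipschitzOnWith.continuousOn (K := 1)
    apply LipschitzOnWith.of_dist_le_mul
    intro a ha b hb
    simp only [NNReal.coe_one, one_mul, Real.dist_eq]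
    have ha' : (0:ℝ) ≤ a := ha
    have hb' : (0:ℝ) ≤ b := hb
    rcases le_total a b with hab | hab
    · rw [abs_sub_comm (f a), abs_sub_comm a b, abs_of_nonneg (by linarith : (0:ℝ) ≤ b - a)]
      exact hflip a b ha' hab
    · rw [abs_of_nonneg (by linarith : (0:ℝ) ≤ a - b)]
      exact hflip b a hb' hab
  have h1c : (1:ℝ) ≤ 2 ^ j := one_le_pow₀ (by norm_num)
  have h2c : (2:ℝ) ^ (j+1) = 2 ^ j * 2 := by ring
  obtain ⟨T₀, hT₀0, hT₀⟩ := hub (2 ^ (j + 1))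
  -- first hitting time of the outer sphere
  set E : Set ℝ := {t | t ∈ Set.Icc 0 T₀ ∧ (2:ℝ) ^ (j+1) ≤ f t} with hE
  have hEsub : E ⊆ Set.Icc 0 T₀ := fun t ht => ht.1
  have hEne : E.Nonempty := ⟨T₀, ⟨hT₀0, le_refl _⟩, hT₀⟩
  have hEclosed : IsClosed E := by
    have : E = Set.Icc 0 T₀ ∩ f ⁻¹' Set.Ici ((2:ℝ)^(j+1)) := by
      ext t; simp [hE, Set.mem_Ici, and_comm]
    rw [this]
    exact ContinuousOn.preimage_isClosed_of_isClosed
      (hcont.mono (fun t ht => ht.1)) isClosed_Icc isClosed_Ici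
  have hEbdd : BddBelow E := ⟨0, fun t ht => ht.1.1⟩
  set T := sInf E with hT
  have hTE : T ∈ E := hEclosed.csInf_mem hEne hEbdd
  have hTlt : ∀ t, 0 ≤ t → t < T → f t < 2 ^ (j+1) := by
    intro t ht htT
    by_contra hc
    push_neg at hc
    exact absurd (csInf_le hEbdd ⟨⟨ht, htT.le.trans hTE.1.2⟩, hc⟩) (not_le.2 htT)
  -- last exit time from the inner sphere
  set F : Set ℝ := {t | t ∈ Set.Icc 0 T ∧ f t ≤ 2 ^ j} with hFdef
  have hFne : F.Nonempty := ⟨0, ⟨le_refl _, hTE.1.1⟩, by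
    show dist O (g 0) ≤ 2 ^ j
    rw [h0]; exact h1c⟩
  have hFclosed : IsClosed F := by
    have : F = Set.Icc 0 T ∩ f ⁻¹' Set.Iic ((2:ℝ)^j) := by
      ext t; simp [hFdef, Set.mem_Iic, and_comm]
    rw [this]
    exact ContinuousOn.preimage_isClosed_of_isClosed
      (hcont.mono (fun t ht => ht.1)) isClosed_Icc isClosed_Iic
  have hFbdd : BddAbove F := ⟨T, fun t ht => ht.1.2⟩
  set s := sSup F with hs
  have hsF : s ∈ F := hFclosed.csSup_mem hFne hFbdd
  have hs0 : 0 ≤ s := hsF.1.1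
  have hsT : s ≤ T := hsF.1.2
  refine ⟨s, T, hs0, ?_, ?_⟩
  · have := hflip s T hs0 hsT
    have hfT : (2:ℝ) ^ (j+1) ≤ f T := hTE.2
    have hfs : f s ≤ 2 ^ j := hsF.2
    have : f T - f s ≤ T - s := (le_abs_self _).trans this
    linarith [h2c ▸ hfT]
  · intro t ⟨hst, htT⟩
    have ht0 : 0 ≤ t := hs0.trans hst.le
    have hlt2 : f t < 2 ^ (j+1) := hTlt t ht0 htT
    have hgt1 : (2:ℝ) ^ j < f t := by
      by_contra hc
      push_neg at hc
      exact absurd (le_csSup hFbdd ⟨⟨ht0, htT.le⟩, hc⟩) (not_le.2 hst)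
    constructor
    · exact mem_ball.2 (by rw [dist_comm]; exact hlt2)
    · intro hmem
      exact absurd (mem_ball.1 hmem) (not_lt.2 (by rw [dist_comm]; exact hgt1.le))

variable [MeasurableSpace X] [BorelSpace X]

/-- The key estimate: a radial step-function built from the annuli is admissible for the
family of tail curves, so the modulus is bounded by its energy. -/
lemma pModulus_le_sum (μ : Measure X) (p : ℝ) (hp : 1 ≤ p) (O : X)
    {S : Type*} (γ : S → ℝ → X)
    (hγinf : ∀ ξ, IsInfiniteCurve (γ ξ)) (hγ0 : ∀ ξ, γ ξ 0 = O)
    (N : ℕ) (a : ℕ → ℝ≥0∞)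
    (hadm : 1 ≤ ∑ j ∈ Finset.range N, a j * 2 ^ j) :
    pModulus μ p (hatGamma O γ (Set.univ : Set S)) ≤
      ∑ j ∈ Finset.range N, a j ^ p * μ (annulusAt O j) := by
  classical
  set ρ : X → ℝ≥0∞ := fun x => ∑ j ∈ Finset.range N, (annulusAt O j).indicator (fun _ => a j) x
    with hρ
  have hmeasA : ∀ j : ℕ, MeasurableSet (annulusAt O j) := fun j =>
    measurableSet_ball.diff measurableSet_ball
  have hρmeas : Measurable ρ :=
    Finset.measurable_sum _ fun j _ => measurable_const.indicator (hmeasA j)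
  have hadm' : ∀ g ∈ hatGamma O γ (Set.univ : Set S),
      1 ≤ ∫⁻ t in Set.Ici (0:ℝ), ρ (g t) := by
    rintro g ⟨ξ, -, -, tξ, htξ, hd1, -, rfl⟩
    set g : ℝ → X := fun t => γ ξ (t + tξ) with hg
    have harc : IsArclengthOn (γ ξ) (Set.Ici 0) := (hγinf ξ).1
    have hlip : ∀ a b : ℝ, 0 ≤ a → a ≤ b → dist (g a) (g b) ≤ b - a := by
      intro a b ha hab
      have := arclength_dist_le harc (a := a + tξ) (b := b + tξ) (by linarith) (by linarith)
      simpa using this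
    have h0 : dist O (g 0) = 1 := by simpa [hg] using hd1
    have hub : ∀ R : ℝ, ∃ t, 0 ≤ t ∧ R ≤ dist O (g t) := by
      intro R
      by_contra hc
      push_neg at hc
      apply (hγinf ξ).2 O (|R| + tξ + 1)
      rintro _ ⟨u, (hu : (0:ℝ) ≤ u), rfl⟩
      rcases le_or_gt u tξ with h | h
      · have := arclength_dist_le harc (a := 0) (b := u) le_rfl hu
        rw [hγ0 ξ] at this
        rw [mem_ball, dist_comm]
        have : dist O (γ ξ u) ≤ u := by linarith
        have hR : (0:ℝ) ≤ |R| := abs_nonneg R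
        linarith
      · have h1 : dist O (g (u - tξ)) < R := hc (u - tξ) (by linarith)
        rw [mem_ball, dist_comm]
        have h2 : g (u - tξ) = γ ξ u := by rw [hg]; norm_num
        rw [h2] at h1
        have := le_abs_self R
        linarith
    have hcr : ∀ j : ℕ, ∃ s T : ℝ, 0 ≤ s ∧ s + 2 ^ j ≤ T ∧
        ∀ t ∈ Set.Ioo s T, g t ∈ annulusAt O j := fun j => crossing hlip h0 hub j
    choose sf Tf hsf hsTf hmemf using hcr
    set I : ℕ → Set ℝ := fun j => Set.Ioo (sf j) (Tf j) with hI
    have hIsub : ∀ j, I j ⊆ Set.Ici (0:ℝ) := fun j t ht => (hsf j).trans ht.1.le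
    have hpt : ∀ t : ℝ,
        (∑ j ∈ Finset.range N, (I j).indicator (fun _ => a j) t) ≤ ρ (g t) := by
      intro t
      by_cases ht : ∃ j₀ ∈ Finset.range N, t ∈ I j₀
      · obtain ⟨j₀, hj₀N, hj₀⟩ := ht
        have hgmem : g t ∈ annulusAt O j₀ := hmemf j₀ t hj₀
        have hsum : (∑ j ∈ Finset.range N, (I j).indicator (fun _ => a j) t) = a j₀ := by
          rw [Finset.sum_eq_single j₀]
          · exact Set.indicator_of_mem hj₀ _
          · intro k hk hne
            apply Set.indicator_of_notMem
            intro hkt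
            exact Set.disjoint_left.1 (annulus_disjoint O hne) (hmemf k t hkt) hgmem
          · intro hn; exact absurd hj₀N hn
        rw [hsum, hρ]
        calc a j₀ = (annulusAt O j₀).indicator (fun _ => a j₀) (g t) :=
              (Set.indicator_of_mem hgmem (fun _ => a j₀)).symm
        _ ≤ ∑ j ∈ Finset.range N, (annulusAt O j).indicator (fun _ => a j) (g t) :=
              Finset.single_le_sum (f := fun j => (annulusAt O j).indicator (fun _ => a j) (g t))
                (fun i _ => zero_le) hj₀N
      · push_neg at ht
        have hsum : (∑ j ∈ Finset.range N, (I j).indicator (fun _ => a j) t) = 0 :=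
          Finset.sum_eq_zero fun k hk => Set.indicator_of_notMem (ht k hk) _
        rw [hsum]; exact zero_le
    calc (1:ℝ≥0∞) ≤ ∑ j ∈ Finset.range N, a j * 2 ^ j := hadm
    _ ≤ ∑ j ∈ Finset.range N, a j * volume (I j) := by
        apply Finset.sum_le_sum
        intro j _
        apply mul_le_mul_right _ (a j)
        rw [hI]
        simp only [Real.volume_Ioo]
        calc (2:ℝ≥0∞) ^ j = ENNReal.ofReal ((2:ℝ) ^ j) := by
              rw [ENNReal.ofReal_pow (by norm_num)]; norm_num
        _ ≤ ENNReal.ofReal (Tf j - sf j) := ENNReal.ofReal_le_ofReal (by linarith [hsTf j])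
    _ = ∑ j ∈ Finset.range N, ∫⁻ t in Set.Ici (0:ℝ), (I j).indicator (fun _ => a j) t := by
        apply Finset.sum_congr rfl
        intro j _
        rw [lintegral_indicator measurableSet_Ioo,
          Measure.restrict_restrict measurableSet_Ioo, Set.inter_eq_self_of_subset_left (hIsub j),
          setLIntegral_const]
    _ = ∫⁻ t in Set.Ici (0:ℝ), ∑ j ∈ Finset.range N, (I j).indicator (fun _ => a j) t :=
        (lintegral_finset_sum _ fun j _ => measurable_const.indicator measurableSet_Ioo).symm
    _ ≤ ∫⁻ t in Set.Ici (0:ℝ), ρ (g t) := lintegral_mono hpt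
  have henergy : (∫⁻ x, ρ x ^ p ∂μ) ≤ ∑ j ∈ Finset.range N, a j ^ p * μ (annulusAt O j) := by
    have hpt : ∀ x, ρ x ^ p ≤
        ∑ j ∈ Finset.range N, (annulusAt O j).indicator (fun _ => a j ^ p) x := by
      intro x
      by_cases hx : ∃ j₀ ∈ Finset.range N, x ∈ annulusAt O j₀
      · obtain ⟨j₀, hj₀N, hj₀⟩ := hx
        have hρx : ρ x = a j₀ := by
          show (∑ j ∈ Finset.range N, (annulusAt O j).indicator (fun _ => a j) x) = a j₀
          rw [Finset.sum_eq_single j₀]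
          · exact Set.indicator_of_mem hj₀ _
          · intro k hk hne
            apply Set.indicator_of_notMem
            intro hkx
            exact Set.disjoint_left.1 (annulus_disjoint O hne) hkx hj₀
          · intro hn; exact absurd hj₀N hn
        rw [hρx]
        calc a j₀ ^ p = (annulusAt O j₀).indicator (fun _ => a j₀ ^ p) x :=
              (Set.indicator_of_mem hj₀ (fun _ => a j₀ ^ p)).symm
        _ ≤ ∑ j ∈ Finset.range N, (annulusAt O j).indicator (fun _ => a j ^ p) x :=
              Finset.single_le_sum (f := fun j => (annulusAt O j).indicator (fun _ => a j ^ p) x)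
                (fun i _ => zero_le) hj₀N
      · push_neg at hx
        have hρx : ρ x = 0 := Finset.sum_eq_zero fun k hk =>
          Set.indicator_of_notMem (hx k hk) _
        rw [hρx, ENNReal.zero_rpow_of_pos (by linarith)]
        exact zero_le
    calc (∫⁻ x, ρ x ^ p ∂μ)
        ≤ ∫⁻ x, ∑ j ∈ Finset.range N, (annulusAt O j).indicator (fun _ => a j ^ p) x ∂μ :=
          lintegral_mono hpt
    _ = ∑ j ∈ Finset.range N, ∫⁻ x, (annulusAt O j).indicator (fun _ => a j ^ p) x ∂μ :=
          lintegral_finset_sum _ fun j _ => measurable_const.indicator (hmeasA j)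
    _ = ∑ j ∈ Finset.range N, a j ^ p * μ (annulusAt O j) := by
          apply Finset.sum_congr rfl
          intro j _
          rw [lintegral_indicator_const (hmeasA j)]
  refine le_trans ?_ henergy
  rw [pModulus]
  exact iInf_le_of_le ρ (iInf_le_of_le hρmeas (iInf_le_of_le hadm' le_rfl))

end Aux

/-- positive modulus of the tail family implies `𝓡_p(O) < ∞`. -/
theorem scrR_finite_of_modulus_positive {X : Type*} [MetricSpace X] [MeasurableSpace X]
    [BorelSpace X]
    (μ : Measure X) (p : ℝ) (hp : 1 ≤ p)
    (hdoub : IsDoublingMeasure μ)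
    (hPI : ∃ lam : ℝ, 1 ≤ lam ∧ SupportsPoincare μ p lam)
    (O : X) (hchain : AnnularChainProperty O)
    {S : Type*} [MeasurableSpace S] (σ : Measure S) (γ : S → ℝ → X)
    (h : X → ℝ≥0∞) (C : ℝ≥0∞) (hpolar : IsWeakPolarSystem μ O σ γ h C)
    (hmod : 0 < pModulus μ p (hatGamma O γ (Set.univ : Set S))) :
    scrR μ p O < ∞ := by
  classical
  obtain ⟨-, hγinf, hγ0, -, -, -, -, -⟩ := hpolar
  set M := pModulus μ p (hatGamma O γ (Set.univ : Set S)) with hM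
  have h2ne0 : ((2:ℝ≥0∞)) ≠ 0 := by norm_num
  have h2netop : ((2:ℝ≥0∞)) ≠ ⊤ := by norm_num
  have hx2 : ∀ j : ℕ, ((2:ℝ≥0∞)) ^ j = ENNReal.ofReal ((2:ℝ) ^ j) := by
    intro j
    rw [ENNReal.ofReal_pow (by norm_num)]
    norm_num
  by_cases hp1 : p = 1
  · subst hp1
    rw [scrR, if_pos rfl]
    have hkey : ∀ j : ℕ, ENNReal.ofReal ((2:ℝ) ^ j) * (μ (annulusAt O j))⁻¹ ≤ M⁻¹ := by
      intro j
      have hsum : ∑ i ∈ Finset.range (j+1),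
          (if i = j then ((2:ℝ≥0∞) ^ j)⁻¹ else 0) * 2 ^ i = 1 := by
        rw [Finset.sum_eq_single j (fun i _ hne => by simp [hne])
          (fun hn => absurd (Finset.self_mem_range_succ j) hn), if_pos rfl]
        exact ENNReal.inv_mul_cancel (pow_ne_zero _ h2ne0) (ENNReal.pow_ne_top h2netop)
      have hle := pModulus_le_sum μ 1 le_rfl O γ hγinf hγ0 (j+1)
        (fun i => if i = j then ((2:ℝ≥0∞) ^ j)⁻¹ else 0) hsum.ge
      have hRHS : ∑ i ∈ Finset.range (j+1),
          (if i = j then ((2:ℝ≥0∞) ^ j)⁻¹ else 0) ^ (1:ℝ) * μ (annulusAt O i)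
          = ((2:ℝ≥0∞) ^ j)⁻¹ * μ (annulusAt O j) := by
        rw [Finset.sum_eq_single j (fun i _ hne => by simp [hne, ENNReal.rpow_one])
          (fun hn => absurd (Finset.self_mem_range_succ j) hn), if_pos rfl, ENNReal.rpow_one]
      rw [hRHS] at hle
      have h2 : ENNReal.ofReal ((2:ℝ) ^ j) * (μ (annulusAt O j))⁻¹
          = (((2:ℝ≥0∞) ^ j)⁻¹ * μ (annulusAt O j))⁻¹ := by
        rw [ENNReal.mul_inv (Or.inl (ENNReal.inv_ne_zero.2 (ENNReal.pow_ne_top h2netop)))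
          (Or.inl (ENNReal.inv_ne_top.2 (pow_ne_zero _ h2ne0))), inv_inv, hx2]
      rw [h2]
      exact ENNReal.inv_le_inv' hle
    exact lt_of_le_of_lt (iSup_le hkey) (ENNReal.inv_lt_top.2 hmod)
  · have hplt : 1 < p := lt_of_le_of_ne hp (Ne.symm hp1)
    have hpm1 : p - 1 ≠ 0 := sub_ne_zero.2 hp1
    rw [scrR, if_neg hp1]
    -- all annuli have positive measure
    have hA0 : ∀ j : ℕ, μ (annulusAt O j) ≠ 0 := by
      intro j hzero
      have hsum : (1:ℝ≥0∞) ≤ ∑ i ∈ Finset.range (j+1),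
          (if i = j then (⊤:ℝ≥0∞) else 0) * 2 ^ i := by
        rw [Finset.sum_eq_single j (fun i _ hne => by simp [hne])
          (fun hn => absurd (Finset.self_mem_range_succ j) hn), if_pos rfl,
          ENNReal.top_mul (pow_ne_zero _ h2ne0)]
        exact le_top
      have hle := pModulus_le_sum μ p hp O γ hγinf hγ0 (j+1)
        (fun i => if i = j then (⊤:ℝ≥0∞) else 0) hsum
      have hRHS : ∑ i ∈ Finset.range (j+1),
          (if i = j then (⊤:ℝ≥0∞) else 0) ^ p * μ (annulusAt O i) = 0 := by
        apply Finset.sum_eq_zero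
        intro i hi
        by_cases hij : i = j
        · subst hij; rw [if_pos rfl, hzero, mul_zero]
        · rw [if_neg hij, ENNReal.zero_rpow_of_pos (by linarith), zero_mul]
      rw [hRHS] at hle
      exact absurd (le_antisymm hle (zero_le)) hmod.ne'
    have hAtop : ∀ j : ℕ, μ (annulusAt O j) ≠ ⊤ := by
      intro j
      have hsub : annulusAt O j ⊆ ball O (2 ^ (j+1)) := Set.diff_subset
      exact ne_top_of_le_ne_top (hdoub.1 O (2 ^ (j+1)) (by positivity)).2.ne (measure_mono hsub)
    have hrnetop : ∀ (y : ℝ≥0∞) (q : ℝ), y ≠ 0 → y ≠ ⊤ → y ^ q ≠ ⊤ := by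
      intro y q hy0 hytop hc
      rcases ENNReal.rpow_eq_top_iff.1 hc with ⟨h1, -⟩ | ⟨h1, -⟩
      exacts [hy0 h1, hytop h1]
    have hrne0 : ∀ (y : ℝ≥0∞) (q : ℝ), y ≠ 0 → y ≠ ⊤ → y ^ q ≠ 0 := by
      intro y q hy0 hytop hc
      rcases ENNReal.rpow_eq_zero_iff.1 hc with ⟨h1, -⟩ | ⟨h1, -⟩
      exacts [hy0 h1, hytop h1]
    set x : ℕ → ℝ≥0∞ := fun j => ENNReal.ofReal ((2:ℝ) ^ j) with hxdef
    have hx0 : ∀ j, x j ≠ 0 := by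
      intro j
      show ENNReal.ofReal ((2:ℝ) ^ j) ≠ 0
      simp only [ne_eq, ENNReal.ofReal_eq_zero, not_le]
      exact pow_pos two_pos j
    have hxtop : ∀ j, x j ≠ ⊤ := fun j => ENNReal.ofReal_ne_top
    set b : ℕ → ℝ≥0∞ := fun j => x j ^ (p / (p - 1)) * μ (annulusAt O j) ^ (1 / (1 - p))
      with hbdef
    show ∑' j, b j < ⊤
    by_contra hcon
    have hsumtop : ∑' j, b j = ⊤ := top_le_iff.1 (not_lt.1 hcon)
    have hbne : ∀ j, b j ≠ ⊤ := fun j =>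
      ENNReal.mul_ne_top (hrnetop _ _ (hx0 j) (hxtop j)) (hrnetop _ _ (hA0 j) (hAtop j))
    set Sf : ℕ → ℝ≥0∞ := fun N => ∑ j ∈ Finset.range N, b j with hSfdef
    have hSuptop : (⨆ N, Sf N) = ⊤ := by
      rw [hSfdef, ← ENNReal.tsum_eq_iSup_nat]
      exact hsumtop
    set c := (M⁻¹) ^ (1 / (p - 1)) with hcdef
    have hclt : c < ⊤ :=
      ENNReal.rpow_lt_top_of_nonneg (le_of_lt (div_pos one_pos (by linarith))) (ENNReal.inv_ne_top.2 hmod.ne')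
    obtain ⟨N, hN⟩ : ∃ N, c < Sf N := by
      rw [← hSuptop] at hclt
      exact lt_iSup_iff.1 hclt
    have hSN0 : Sf N ≠ 0 := by
      intro hz
      rw [hz] at hN
      simp at hN
    have hSNtop : Sf N ≠ ⊤ := by
      rw [hSfdef]
      exact (ENNReal.sum_lt_top.2 fun j _ => (hbne j).lt_top).ne
    -- the admissible function
    set a : ℕ → ℝ≥0∞ := fun j =>
      x j ^ (1 / (p - 1)) * μ (annulusAt O j) ^ (1 / (1 - p)) * (Sf N)⁻¹ with hadef
    have hterm : ∀ j : ℕ, a j * 2 ^ j = b j * (Sf N)⁻¹ := by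
      intro j
      have h2j : ((2:ℝ≥0∞)) ^ j = x j := (hx2 j)
      have hxx : x j ^ (1 / (p - 1)) * x j = x j ^ (p / (p - 1)) := by
        have hexp : p / (p - 1) = 1 / (p - 1) + 1 := by field_simp; ring
        rw [hexp, ENNReal.rpow_add _ _ (hx0 j) (hxtop j), ENNReal.rpow_one]
      calc a j * 2 ^ j
          = (x j ^ (1 / (p - 1)) * x j) * μ (annulusAt O j) ^ (1 / (1 - p)) * (Sf N)⁻¹ := by
            rw [hadef, h2j]; ring
      _ = b j * (Sf N)⁻¹ := by rw [hxx, hbdef]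
    have hadm : (1:ℝ≥0∞) ≤ ∑ j ∈ Finset.range N, a j * 2 ^ j := by
      have : ∑ j ∈ Finset.range N, a j * 2 ^ j = Sf N * (Sf N)⁻¹ := by
        rw [hSfdef]
        rw [Finset.sum_congr rfl fun j _ => hterm j, ← Finset.sum_mul]
      rw [this, ENNReal.mul_inv_cancel hSN0 hSNtop]
    have hle := pModulus_le_sum μ p hp O γ hγinf hγ0 N a hadm
    have hterm2 : ∀ j : ℕ, a j ^ p * μ (annulusAt O j) = b j * ((Sf N) ^ p)⁻¹ := by
      intro j
      have hp0 : (0:ℝ) ≤ p := by linarith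
      have e1 : (x j ^ (1 / (p - 1))) ^ p = x j ^ (p / (p - 1)) := by
        rw [← ENNReal.rpow_mul]
        congr 1
        field_simp
      have e2 : (μ (annulusAt O j) ^ (1 / (1 - p))) ^ p = μ (annulusAt O j) ^ (p / (1 - p)) := by
        rw [← ENNReal.rpow_mul]
        congr 1
        field_simp
      have e3 : ((Sf N)⁻¹) ^ p = ((Sf N) ^ p)⁻¹ := ENNReal.inv_rpow _ _
      have e4 : μ (annulusAt O j) ^ (p / (1 - p)) * μ (annulusAt O j)
          = μ (annulusAt O j) ^ (1 / (1 - p)) := by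
        have h1p : 1 - p ≠ 0 := by intro hz; apply hpm1; linarith
        have hexp : 1 / (1 - p) = p / (1 - p) + 1 := by field_simp; ring
        rw [hexp, ENNReal.rpow_add _ _ (hA0 j) (hAtop j), ENNReal.rpow_one]
      calc a j ^ p * μ (annulusAt O j)
          = (x j ^ (1 / (p - 1))) ^ p * ((μ (annulusAt O j) ^ (1 / (1 - p))) ^ p
              * ((Sf N)⁻¹) ^ p) * μ (annulusAt O j) := by
            rw [hadef, ENNReal.mul_rpow_of_nonneg _ _ hp0, ENNReal.mul_rpow_of_nonneg _ _ hp0]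
            ring
      _ = x j ^ (p / (p - 1)) * (μ (annulusAt O j) ^ (p / (1 - p)) * μ (annulusAt O j))
            * ((Sf N) ^ p)⁻¹ := by rw [e1, e2, e3]; ring
      _ = b j * ((Sf N) ^ p)⁻¹ := by rw [e4, hbdef]
    have hRHS : ∑ j ∈ Finset.range N, a j ^ p * μ (annulusAt O j)
        = Sf N * ((Sf N) ^ p)⁻¹ := by
      rw [Finset.sum_congr rfl fun j _ => hterm2 j, ← Finset.sum_mul, hSfdef]
    rw [hRHS] at hle
    have hfin : Sf N * ((Sf N) ^ p)⁻¹ = ((Sf N) ^ (p - 1))⁻¹ := by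
      have hsp : (Sf N) ^ p = Sf N * (Sf N) ^ (p - 1) := by
        conv_lhs => rw [show p = 1 + (p - 1) by ring]
        rw [ENNReal.rpow_add _ _ hSN0 hSNtop, ENNReal.rpow_one]
      rw [hsp, ENNReal.mul_inv (Or.inl hSN0) (Or.inl hSNtop), ← mul_assoc,
        ENNReal.mul_inv_cancel hSN0 hSNtop, one_mul]
    rw [hfin] at hle
    -- conclude the contradiction
    have h1 : (Sf N) ^ (p - 1) ≤ M⁻¹ := by
      have := ENNReal.inv_le_inv' hle
      rwa [inv_inv] at this
    have h2 : c ^ (p - 1) = M⁻¹ := by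
      rw [hcdef, ← ENNReal.rpow_mul]
      have : 1 / (p - 1) * (p - 1) = 1 := by field_simp
      rw [this, ENNReal.rpow_one]
    have h3 : c ^ (p - 1) < (Sf N) ^ (p - 1) := ENNReal.rpow_lt_rpow hN (by linarith)
    rw [h2] at h3
    exact absurd h1 (not_le.2 h3)
end

section
/- Let μ be a doubling measure on a metric space (X,d), let O ∈ X, and suppose X is annularly C-quasiconvex at O for some C ≥ 1, i.e., for every r > 0, every pair of points x, y ∈ B(O,r) ∖ B(O,r/2) can be joined by a curve of length at most C·d(x,y) contained in B(O,Cr) ∖ B(O,r/C). Then X has the annular chain property at O. -/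
open MeasureTheory Metric Filter Set
open scoped ENNReal

variable {X : Type*}

/-- annular quasiconvexity implies the annular chain property. -/
theorem annular_chain_of_quasiconvex {X : Type*} [MetricSpace X] [MeasurableSpace X]
    (μ : Measure X) (hdoub : IsDoublingMeasure μ) (O : X)
    (C : ℝ) (hC : 1 ≤ C)
    (hqc : ∀ r : ℝ, 0 < r → ∀ x y : X,
      x ∈ ball O r \ ball O (r / 2) → y ∈ ball O r \ ball O (r / 2) →
      ∃ (L : ℝ) (γ : ℝ → X), 0 ≤ L ∧ L ≤ C * dist x y ∧
        IsArclengthOn γ (Set.Icc 0 L) ∧ γ 0 = x ∧ γ L = y ∧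
        γ '' Set.Icc 0 L ⊆ ball O (C * r) \ ball O (r / C)) :
    AnnularChainProperty O := by
  intro lam hlam
  have hC0 : (0:ℝ) < C := lt_of_lt_of_le one_pos hC
  have hlam0 : (0:ℝ) < lam := lt_of_lt_of_le one_pos hlam
  refine ⟨4*C, 2*C, 1/(16*lam*C), ⌈16*lam*C^2⌉₊ + 1, by linarith, by linarith,
    by positivity, ?_⟩
  intro r hr x y hx hy
  obtain ⟨L, γ, hL0, hLle, harc, hγ0, hγL, himg⟩ := hqc r hr x y hx hy
  set ρ := r / (lam * (4*C)) with hρ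
  have hρpos : 0 < ρ := by positivity
  set s := ρ / 2 with hs
  have hspos : 0 < s := by positivity
  set q := r / (4*C) with hq
  have hq1 : r / C = 4 * q := by rw [hq]; field_simp
  have hq2 : r / (2*C) = 2 * q := by rw [hq]; field_simp; ring
  have hρq : ρ ≤ q := by
    apply div_le_div_of_nonneg_left hr.le (by positivity)
    nlinarith
  have hqr : q ≤ r := by
    rw [hq]; exact div_le_self hr.le (by linarith)
  -- distance bound along the curve
  have hdist : ∀ a b : ℝ, 0 ≤ a → a ≤ b → b ≤ L → dist (γ a) (γ b) ≤ b - a := by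
    intro a b ha hab hbL
    have h1 : edist (γ a) (γ b) ≤ eVariationOn γ (Set.Icc a b) :=
      eVariationOn.edist_le γ (Set.left_mem_Icc.2 hab) (Set.right_mem_Icc.2 hab)
    rw [harc a b ⟨ha, le_trans hab hbL⟩ ⟨le_trans ha hab, hbL⟩ hab] at h1
    rw [edist_dist] at h1
    exact (ENNReal.ofReal_le_ofReal_iff (by linarith)).1 h1
  have himg' : ∀ t : ℝ, 0 ≤ t → t ≤ L →
      4 * q ≤ dist (γ t) O ∧ dist (γ t) O < C * r := by
    intro t ht htL
    have := himg ⟨t, ⟨ht, htL⟩, rfl⟩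
    rw [mem_diff, mem_ball, mem_ball] at this
    refine ⟨?_, this.1⟩
    rw [← hq1]
    exact not_lt.1 this.2
  set n := ⌈L / s⌉₊ with hn
  have hLn : L ≤ n * s := by
    rw [← div_le_iff₀ hspos]
    exact Nat.le_ceil _
  set t : ℕ → ℝ := fun i => min ((i:ℝ) * s) L with ht
  have ht0 : ∀ i, 0 ≤ t i := fun i => le_min (by positivity) hL0
  have htL : ∀ i, t i ≤ L := fun i => min_le_right _ _
  have htmono : ∀ i, t i ≤ t (i+1) := by
    intro i
    apply min_le_min _ le_rfl
    push_cast
    nlinarith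
  have htstep : ∀ i : ℕ, t (i+1) - t i ≤ s := by
    intro i
    rcases le_total ((i:ℝ) * s) L with h | h
    · have : t i = (i:ℝ) * s := min_eq_left h
      rw [this]
      have h2 : t (i+1) ≤ ((i+1 : ℕ):ℝ) * s := min_le_left _ _
      push_cast at h2
      have h3 : ((i:ℝ)+1) * s = (i:ℝ) * s + s := by ring
      linarith
    · have h1 : t i = L := min_eq_right h
      have h2 : t (i+1) ≤ L := min_le_right _ _
      linarith
  refine ⟨n + 1, fun i => γ (t i), le_add_self, ?_, ?_, ?_, ?_, ?_⟩
  · -- k ≤ M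
    have hxy : dist x y < 2 * r := by
      have h1 : dist x O < r := mem_ball.1 hx.1
      have h2 : dist y O < r := mem_ball.1 hy.1
      calc dist x y ≤ dist x O + dist O y := dist_triangle _ _ _
        _ < 2 * r := by rw [dist_comm O y]; linarith
    have hLs : L / s ≤ 16 * lam * C^2 := by
      rw [div_le_iff₀ hspos]
      have hsv : 16 * lam * C^2 * s = 2 * C * r := by
        rw [hs, hρ]; field_simp; ring
      rw [hsv]
      nlinarith
    have : n ≤ ⌈(16:ℝ) * lam * C^2⌉₊ := Nat.ceil_le_ceil hLs
    omega
  · -- c 0 = x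
    simp only [ht]
    norm_num
    rw [min_eq_left hL0, hγ0]
  · -- c (k-1) = y
    simp only [Nat.add_sub_cancel, ht]
    rw [min_eq_right hLn, hγL]
  · -- balls inside annulus
    intro i _ w hw
    rw [mem_ball] at hw
    obtain ⟨hlb, hub⟩ := himg' (t i) (ht0 i) (htL i)
    have hd1 : dist w O ≤ dist w (γ (t i)) + dist (γ (t i)) O := dist_triangle _ _ _
    have hd2 : dist (γ (t i)) O ≤ dist (γ (t i)) w + dist w O := dist_triangle _ _ _
    rw [dist_comm (γ (t i)) w] at hd2
    constructor
    · rw [mem_ball]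
      have : ρ ≤ C * r := by nlinarith
      calc dist w O ≤ dist w (γ (t i)) + dist (γ (t i)) O := hd1
        _ < 2 * C * r := by nlinarith
    · rw [mem_ball, hq2]
      intro hcon
      nlinarith
  · -- chaining balls
    intro i hi
    refine ⟨γ (t i), fun w hw => ?_⟩
    rw [mem_ball] at hw
    have hδ : 1 / (16*lam*C) * r = ρ / 4 := by
      rw [hρ, div_div, show lam * (4*C) * 4 = 16*lam*C by ring, one_div, inv_mul_eq_div]
    rw [hδ] at hw
    have hstep : dist (γ (t i)) (γ (t (i+1))) ≤ s :=
      le_trans (hdist (t i) (t (i+1)) (ht0 i) (htmono i) (htL (i+1))) (htstep i)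
    constructor
    · rw [mem_ball]
      linarith
    · rw [mem_ball]
      calc dist w (γ (t (i+1))) ≤ dist w (γ (t i)) + dist (γ (t i)) (γ (t (i+1))) :=
          dist_triangle _ _ _
        _ < ρ := by rw [hs] at hstep; linarith
end
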